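/- Let 0 < β < γ and 0 < c < β/(γ−β), and for U > max(β−γ, 0) large enough that γ + U − β > 0, define ξ(U) := ( β(γ + U + cU)/(cγ(γ + U − β)) )^{(γ+U−β)/(γ+U)} − 1. Then lim_{U→∞} ξ(U) = (β + βc − γc)/(γc). -/

import Mathlib

open Filter Topology

/-- Let `0 < β < γ` and `0 < c < β/(γ−β)`, and define
`ξ(U) := ( β(γ + U + cU)/(cγ(γ + U − β)) )^{(γ+U−β)/(γ+U)} − 1` (for `U` large enough
that `γ + U − β > 0`).  Then `lim_{U→∞} ξ(U) = (β + βc − γc)/(γc)`. -/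
theorem stmt_19 (β γ c : ℝ) (hβ : 0 < β) (hβγ : β < γ) (hc0 : 0 < c)
    (hc : c < β / (γ - β)) :
    Tendsto (fun U : ℝ =>
        (β * (γ + U + c * U) / (c * γ * (γ + U - β))) ^ ((γ + U - β) / (γ + U)) - 1)
      atTop (𝓝 ((β + β * c - γ * c) / (γ * c))) := by
  have hγ : 0 < γ := hβ.trans hβγ
  have h1 : Tendsto (fun U : ℝ => γ + U - β) atTop atTop := by
    have := tendsto_atTop_add_const_right atTop (γ - β) tendsto_id
    exact this.congr fun U => by simp only [id]; ring
  have h2 : Tendsto (fun U : ℝ => γ + U) atTop atTop := by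
    have := tendsto_atTop_add_const_right atTop γ tendsto_id
    exact this.congr fun U => by simp only [id]; ring
  have hinv1 : Tendsto (fun U : ℝ => (γ + U - β)⁻¹) atTop (𝓝 0) := h1.inv_tendsto_atTop
  have hinv2 : Tendsto (fun U : ℝ => (γ + U)⁻¹) atTop (𝓝 0) := h2.inv_tendsto_atTop
  have hbase : Tendsto (fun U : ℝ => β * (γ + U + c * U) / (c * γ * (γ + U - β))) atTop
      (𝓝 (β * (1 + c) / (c * γ))) := by
    have key : Tendsto
        (fun U : ℝ => β / (c * γ) * ((1 + c) + (β + c * β - c * γ) * (γ + U - β)⁻¹))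
        atTop (𝓝 (β / (c * γ) * ((1 + c) + (β + c * β - c * γ) * 0))) :=
      (tendsto_const_nhds.add (tendsto_const_nhds.mul hinv1)).const_mul _
    rw [show β / (c * γ) * ((1 + c) + (β + c * β - c * γ) * 0) = β * (1 + c) / (c * γ) by
      ring] at key
    refine key.congr' ?_
    filter_upwards [h1.eventually_gt_atTop 0] with U hU
    have hne : γ + U - β ≠ 0 := ne_of_gt hU
    have hcγ : c * γ ≠ 0 := by positivity
    field_simp
    ring
  have hexp : Tendsto (fun U : ℝ => (γ + U - β) / (γ + U)) atTop (𝓝 1) := by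
    have key : Tendsto (fun U : ℝ => 1 - β * (γ + U)⁻¹) atTop (𝓝 (1 - β * 0)) :=
      tendsto_const_nhds.sub (tendsto_const_nhds.mul hinv2)
    rw [show (1 : ℝ) - β * 0 = 1 by ring] at key
    refine key.congr' ?_
    filter_upwards [h2.eventually_gt_atTop 0] with U hU
    have hne : γ + U ≠ 0 := ne_of_gt hU
    field_simp
  have hL : β * (1 + c) / (c * γ) ≠ 0 := by positivity
  have hr := (hbase.rpow hexp (Or.inl hL)).sub_const 1
  rw [show (β + β * c - γ * c) / (γ * c) = (β * (1 + c) / (c * γ)) ^ (1 : ℝ) - 1 by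
    rw [Real.rpow_one]; field_simp]
  exact hr
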